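/- In any Nash Equilibrium (m, p) of the simplified game, if node i has μ_i(p) < max_j μ_j(p), then m_i = 0 and p_i = 1. -/

import Mathlib

/-- Defender feasibility: `∑ m_i ≤ B` and `0 ≤ m_i ≤ 1 / w_i`. -/
def DefFeasible {N : ℕ} (w : Fin N → ℝ) (B : ℝ) (m : Fin N → ℝ) : Prop :=
  (∑ i, m i ≤ B) ∧ ∀ i, 0 ≤ m i ∧ m i ≤ 1 / w i

/-- Attacker feasibility: `∑ m_i w_i p_i ≤ M` and `p_i ∈ [0,1]`. -/
def AtkFeasible {N : ℕ} (w : Fin N → ℝ) (M : ℝ) (m p : Fin N → ℝ) : Prop :=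
  (∑ i, m i * w i * p i ≤ M) ∧ ∀ i, 0 ≤ p i ∧ p i ≤ 1

/-- Defender payoff. -/
def Ud {N : ℕ} (r w CD : Fin N → ℝ) (m p : Fin N → ℝ) : ℝ :=
  ∑ i, (m i * (p i * r i * w i - CD i) - p i * r i)

/-- Attacker payoff. -/
def Ua {N : ℕ} (r w CA : Fin N → ℝ) (m p : Fin N → ℝ) : ℝ :=
  ∑ i, p i * (r i - m i * (r i * w i + CA i))

/-- Nash Equilibrium of the simplified game. -/
def IsNE {N : ℕ} (r w CA CD : Fin N → ℝ) (B M : ℝ) (m p : Fin N → ℝ) : Prop :=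
  DefFeasible w B m ∧ AtkFeasible w M m p ∧
    (∀ m', DefFeasible w B m' → Ud r w CD m' p ≤ Ud r w CD m p) ∧
    (∀ p', AtkFeasible w M m p' → Ua r w CA m p' ≤ Ua r w CA m p)

lemma sum_apply_update {N : ℕ} (g : Fin N → ℝ → ℝ) (m : Fin N → ℝ) (j : Fin N) (x : ℝ) :
    ∑ i, g i (Function.update m j x i) = (∑ i, g i (m i)) + (g j x - g j (m j)) := by
  classical
  have e1 := Finset.sum_erase_add Finset.univ (fun i => g i (Function.update m j x i)) (Finset.mem_univ j)
  have e2 := Finset.sum_erase_add Finset.univ (fun i => g i (m i)) (Finset.mem_univ j)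
  have h1 : ∑ i ∈ Finset.univ.erase j, g i (Function.update m j x i)
      = ∑ i ∈ Finset.univ.erase j, g i (m i) :=
    Finset.sum_congr rfl fun i hi => by
      rw [Function.update_of_ne (Finset.ne_of_mem_erase hi)]
  rw [← e1, ← e2, h1]
  simp only [Function.update_self]
  ring

lemma Ud_update {N : ℕ} (r w CD m p : Fin N → ℝ) (j : Fin N) (x : ℝ) :
    Ud r w CD (Function.update m j x) p
      = Ud r w CD m p + (x - m j) * (p j * r j * w j - CD j) := by
  unfold Ud
  rw [sum_apply_update (fun i t => t * (p i * r i * w i - CD i) - p i * r i)]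
  ring

lemma Ua_update {N : ℕ} (r w CA m p : Fin N → ℝ) (j : Fin N) (x : ℝ) :
    Ua r w CA m (Function.update p j x)
      = Ua r w CA m p + (x - p j) * (r j - m j * (r j * w j + CA j)) := by
  unfold Ua
  rw [sum_apply_update (fun i t => t * (r i - m i * (r i * w i + CA i)))]
  ring

/-- In any Nash Equilibrium, any node `i` whose coefficient `μ_i(p) = p_i r_i w_i - C_i^D`
is strictly below the maximum `max_j μ_j(p)` has `m_i = 0` and `p_i = 1`. -/
theorem ne_nonmax_mu {N : ℕ} (hN : 0 < N) (r w CA CD : Fin N → ℝ) (B M : ℝ)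
    (hr : ∀ i, 0 < r i) (hw : ∀ i, 0 < w i) (hCA : ∀ i, 0 < CA i) (hCD : ∀ i, 0 < CD i)
    (hCDr : ∀ i, CD i / (r i * w i) ≤ 1) (hB : 0 < B) (hM : 0 < M)
    (m p : Fin N → ℝ) (hNE : IsNE r w CA CD B M m p)
    (i : Fin N)
    (hlt : p i * r i * w i - CD i <
      Finset.univ.sup' ⟨⟨0, hN⟩, Finset.mem_univ _⟩ (fun j => p j * r j * w j - CD j)) :
    m i = 0 ∧ p i = 1 := by
  obtain ⟨⟨hBsum, hmb⟩, ⟨hMsum, hpb⟩, hD, hA⟩ := hNE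
  obtain ⟨k, -, hks⟩ := Finset.exists_mem_eq_sup'
    (⟨⟨0, hN⟩, Finset.mem_univ _⟩ : (Finset.univ : Finset (Fin N)).Nonempty)
    (fun j => p j * r j * w j - CD j)
  rw [hks] at hlt
  -- Step A : m k < 1 / w k
  have hmk : m k < 1 / w k := by
    rcases lt_or_eq_of_le (hmb k).2 with h | h
    · exact h
    exfalso
    have hck : r k - m k * (r k * w k + CA k) < 0 := by
      have hmul : m k * (r k * w k + CA k) = r k + CA k / w k := by
        rw [h]; field_simp
        rw [add_div, mul_div_cancel_left₀ (r k) (ne_of_gt (hw k))]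
      have : 0 < CA k / w k := div_pos (hCA k) (hw k)
      linarith [hmul ▸ (by linarith : r k < r k + CA k / w k)]
    have hpk : p k = 0 := by
      by_contra hpk0
      have hpk : 0 < p k := lt_of_le_of_ne (hpb k).1 (Ne.symm hpk0)
      have hfeas : AtkFeasible w M m (Function.update p k 0) := by
        constructor
        · have hs := sum_apply_update (fun i t => m i * w i * t) p k 0
          have hnn : 0 ≤ m k * w k * p k :=
            mul_nonneg (mul_nonneg (hmb k).1 (hw k).le) hpk.le
          calc ∑ j, m j * w j * Function.update p k 0 j
              = (∑ j, m j * w j * p j) + (m k * w k * 0 - m k * w k * p k) := hs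
            _ ≤ M := by linarith
        · intro j; by_cases hj : j = k
          · subst hj; simp
          · rw [Function.update_of_ne hj]; exact hpb j
      have hle := hA _ hfeas
      rw [Ua_update] at hle
      nlinarith [mul_pos hpk (neg_pos.mpr hck)]
    have hmkpos : 0 < m k := by rw [h]; exact div_pos one_pos (hw k)
    have hfeas : DefFeasible w B (Function.update m k 0) := by
      constructor
      · have hs := sum_apply_update (fun _ t => t) m k 0
        calc ∑ j, Function.update m k 0 j
            = (∑ j, m j) + ((0:ℝ) - m k) := hs
          _ ≤ B := by linarith
      · intro j; by_cases hj : j = k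
        · subst hj; rw [Function.update_self]
          exact ⟨le_refl 0, (div_pos one_pos (hw j)).le⟩
        · rw [Function.update_of_ne hj]; exact hmb j
    have hle := hD _ hfeas
    rw [Ud_update, hpk] at hle
    nlinarith [mul_pos hmkpos (hCD k)]
  -- i ≠ k
  have hik : i ≠ k := fun hEq => by rw [hEq] at hlt; exact lt_irrefl _ hlt
  -- Step B : m i = 0
  have hmi : m i = 0 := by
    rcases eq_or_lt_of_le (hmb i).1 with h | h
    · exact h.symm
    exfalso
    set ε := min (m i) (1 / w k - m k) with hε
    have hε0 : 0 < ε := lt_min h (by linarith)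
    have hε1 : ε ≤ m i := min_le_left _ _
    have hε2 : ε ≤ 1 / w k - m k := min_le_right _ _
    have hki : Function.update m i (m i - ε) k = m k :=
      Function.update_of_ne (Ne.symm hik) _ _
    have hfeas : DefFeasible w B
        (Function.update (Function.update m i (m i - ε)) k (m k + ε)) := by
      constructor
      · have h1 := sum_apply_update (fun _ t => t) (Function.update m i (m i - ε)) k (m k + ε)
        have h2 := sum_apply_update (fun _ t => t) m i (m i - ε)
        simp only [hki] at h1
        calc ∑ j, Function.update (Function.update m i (m i - ε)) k (m k + ε) j
            = (∑ j, Function.update m i (m i - ε) j) + ((m k + ε) - m k) := h1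
          _ = ((∑ j, m j) + ((m i - ε) - m i)) + ((m k + ε) - m k) := by rw [h2]
          _ = ∑ j, m j := by ring
          _ ≤ B := hBsum
      · intro j
        by_cases hj : j = k
        · subst hj; rw [Function.update_self]
          exact ⟨by linarith [(hmb j).1], by linarith⟩
        · rw [Function.update_of_ne hj]
          by_cases hj2 : j = i
          · subst hj2; rw [Function.update_self]
            exact ⟨by linarith, by linarith [(hmb j).2]⟩
          · rw [Function.update_of_ne hj2]; exact hmb j
    have hle := hD _ hfeas
    rw [Ud_update, Ud_update, hki] at hle
    nlinarith [mul_pos hε0 (sub_pos.mpr hlt)]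
  -- Step C : p i = 1
  have hpi : p i = 1 := by
    rcases eq_or_lt_of_le (hpb i).2 with h | h
    · exact h
    exfalso
    have hfeas : AtkFeasible w M m (Function.update p i 1) := by
      constructor
      · have hs := sum_apply_update (fun j t => m j * w j * t) p i 1
        calc ∑ j, m j * w j * Function.update p i 1 j
            = (∑ j, m j * w j * p j) + (m i * w i * 1 - m i * w i * p i) := hs
          _ = ∑ j, m j * w j * p j := by rw [hmi]; ring
          _ ≤ M := hMsum
      · intro j; by_cases hj : j = i
        · subst hj; simp
        · rw [Function.update_of_ne hj]; exact hpb j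
    have hle := hA _ hfeas
    rw [Ua_update, hmi] at hle
    nlinarith [mul_pos (sub_pos.mpr h) (hr i)]
  exact ⟨hmi, hpi⟩
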